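/- arXiv:2308.13639 — 2 statements merged into one kernel-verified Lean document; each statement's English description precedes it below -/
import Mathlib

section
/- Let G be a cubic graph with df(G) = 3 and let M be an optimal 3-array whose core contains no triply covered edge. Then the core of M is a single 6-cycle, and moreover this 6-cycle is an induced (chordless) cycle of G. -/
open SimpleGraph

variable {V : Type} [Fintype V] [DecidableEq V]

/-- A cubic graph: every vertex has exactly three neighbours. -/
def IsCubic (G : SimpleGraph V) : Prop := ∀ v : V, (G.neighborSet v).ncard = 3

/-- A proper 3-edge-colouring: adjacent (distinct, vertex-sharing) edges get distinct colours. -/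
def ProperEdgeColoring (G : SimpleGraph V) (c : Sym2 V → Fin 3) : Prop :=
  ∀ e₁ ∈ G.edgeSet, ∀ e₂ ∈ G.edgeSet, e₁ ≠ e₂ → (∃ v : V, v ∈ e₁ ∧ v ∈ e₂) → c e₁ ≠ c e₂

def ThreeEdgeColorable (G : SimpleGraph V) : Prop :=
  ∃ c : Sym2 V → Fin 3, ProperEdgeColoring G c

/-- 2-connectedness: at least 3 vertices, connected, and deleting any vertex leaves it connected. -/
def TwoConnected (G : SimpleGraph V) : Prop :=
  3 ≤ Fintype.card V ∧ G.Connected ∧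
    ∀ v : V, ((⊤ : G.Subgraph).deleteVerts {v}).coe.Connected

/-- A snark: a 2-connected cubic graph with no proper 3-edge-colouring. -/
def IsSnark (G : SimpleGraph V) : Prop :=
  IsCubic G ∧ TwoConnected G ∧ ¬ ThreeEdgeColorable G

/-- The set of edges left uncovered by a 3-array of perfect matchings. -/
def uncovered (G : SimpleGraph V) (M : Fin 3 → G.Subgraph) : Set (Sym2 V) :=
  {e | e ∈ G.edgeSet ∧ ∀ i, e ∉ (M i).edgeSet}

/-- The colouring defect: minimum number of uncovered edges over all 3-arrays. -/
noncomputable def defect (G : SimpleGraph V) : ℕ :=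
  sInf {n : ℕ | ∃ M : Fin 3 → G.Subgraph,
    (∀ i, (M i).IsPerfectMatching) ∧ n = (uncovered G M).ncard}

/-- The number of matchings of the 3-array containing a given edge. -/
noncomputable def coverCount (G : SimpleGraph V) (M : Fin 3 → G.Subgraph)
    (e : Sym2 V) : ℕ :=
  {i : Fin 3 | e ∈ (M i).edgeSet}.ncard

/-- The edge set of the core: edges of `G` not simply covered. -/
def coreEdges (G : SimpleGraph V) (M : Fin 3 → G.Subgraph) : Set (Sym2 V) :=
  {e | e ∈ G.edgeSet ∧ coverCount G M e ≠ 1}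

/-- The core of a 3-array, as a graph on `V`. -/
def coreGraph (G : SimpleGraph V) (M : Fin 3 → G.Subgraph) : SimpleGraph V where
  Adj u w := G.Adj u w ∧ coverCount G M s(u, w) ≠ 1
  symm := by
    constructor
    intro u w h
    refine ⟨h.1.symm, ?_⟩
    rw [Sym2.eq_swap]
    exact h.2
  loopless := by
    constructor
    intro v h
    exact G.loopless.irrefl v h.1

set_option linter.unusedSectionVars false
set_option linter.unusedVariables false

lemma sym2_rep (e : Sym2 V) : ∃ x y, e = s(x, y) := by
  induction e using Sym2.ind with
  | _ x y => exact ⟨x, y, rfl⟩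

lemma fin3_third : ∀ (i j : Fin 3), i ≠ j →
    ∃ k, k ≠ i ∧ k ≠ j ∧ ∀ l, l = i ∨ l = j ∨ l = k := by decide

lemma cnt_le_three (G : SimpleGraph V) (M : Fin 3 → G.Subgraph) (e : Sym2 V) :
    coverCount G M e ≤ 3 := by
  have h := Set.ncard_le_ncard (Set.subset_univ {i : Fin 3 | e ∈ (M i).edgeSet})
    Set.finite_univ
  simpa [coverCount, Set.ncard_univ] using h

lemma cnt_zero_iff (G : SimpleGraph V) (M : Fin 3 → G.Subgraph) (e : Sym2 V) :
    coverCount G M e = 0 ↔ ∀ i, e ∉ (M i).edgeSet := by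
  rw [coverCount, Set.ncard_eq_zero (Set.toFinite _)]
  simp [Set.eq_empty_iff_forall_notMem]

lemma cnt_two_of (G : SimpleGraph V) (M : Fin 3 → G.Subgraph)
    (h3 : ∀ e ∈ G.edgeSet, coverCount G M e ≠ 3) (e : Sym2 V) (he : e ∈ G.edgeSet)
    (i j : Fin 3) (hij : i ≠ j) (hi : e ∈ (M i).edgeSet) (hj : e ∈ (M j).edgeSet) :
    coverCount G M e = 2 := by
  have h2 : ({i, j} : Set (Fin 3)) ⊆ {l : Fin 3 | e ∈ (M l).edgeSet} := by
    intro l hl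
    rcases hl with rfl | rfl
    · exact hi
    · exact hj
  have hle : 2 ≤ coverCount G M e := by
    have := Set.ncard_le_ncard h2 (Set.toFinite _)
    rwa [Set.ncard_pair hij] at this
  have := cnt_le_three G M e
  have := h3 e he
  omega

lemma cnt_three_of (G : SimpleGraph V) (M : Fin 3 → G.Subgraph) (e : Sym2 V)
    (i j k : Fin 3) (hij : i ≠ j) (hik : i ≠ k) (hjk : j ≠ k)
    (hi : e ∈ (M i).edgeSet) (hj : e ∈ (M j).edgeSet) (hk : e ∈ (M k).edgeSet) :
    coverCount G M e = 3 := by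
  have h2 : ({i, j, k} : Set (Fin 3)) ⊆ {l : Fin 3 | e ∈ (M l).edgeSet} := by
    intro l hl
    rcases hl with rfl | rfl | rfl
    · exact hi
    · exact hj
    · exact hk
  have h3 : ({i, j, k} : Set (Fin 3)).ncard = 3 :=
    Set.ncard_eq_three.mpr ⟨i, j, k, hij, hik, hjk, rfl⟩
  have hle := Set.ncard_le_ncard h2 (Set.toFinite _)
  rw [h3] at hle
  have h4 := cnt_le_three G M e
  rw [coverCount] at h4 ⊢
  omega

lemma pair_inter_nonempty (P Q : Set (Fin 3)) (hP : P.ncard = 2) (hQ : Q.ncard = 2) :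
    (P ∩ Q).Nonempty := by
  by_contra h
  rw [Set.not_nonempty_iff_eq_empty] at h
  have hd : Disjoint P Q := Set.disjoint_iff_inter_eq_empty.mpr h
  have hu : (P ∪ Q).ncard = 4 := by
    rw [Set.ncard_union_eq hd (Set.toFinite _) (Set.toFinite _), hP, hQ]
  have := Set.ncard_le_ncard (Set.subset_univ (P ∪ Q)) Set.finite_univ
  rw [hu, Set.ncard_univ] at this
  simp at this

lemma pair_eq_of_not_mem (P Q : Set (Fin 3)) (hP : P.ncard = 2) (hQ : Q.ncard = 2)
    (j : Fin 3) (hjP : j ∉ P) (hjQ : j ∉ Q) : P = Q := by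
  have key : ∀ R : Set (Fin 3), R.ncard = 2 → j ∉ R → R = {j}ᶜ := by
    intro R hR hjR
    have hsub : R ⊆ {j}ᶜ := fun x hx => by
      simp only [Set.mem_compl_iff, Set.mem_singleton_iff]
      rintro rfl; exact hjR hx
    refine Set.eq_of_subset_of_ncard_le hsub ?_ (Set.toFinite _)
    have : ({j}ᶜ : Set (Fin 3)).ncard = 2 := by
      rw [Set.compl_eq_univ_diff, Set.ncard_diff (Set.subset_univ _), Set.ncard_univ,
        Set.ncard_singleton]
      simp
    omega
  rw [key P hP hjP, key Q hQ hjQ]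

lemma set_three_mem {α : Type} (s : Set α) (hs : s.ncard = 3) (x w : α)
    (hx : x ∈ s) (hw : w ∈ s) (hxw : x ≠ w) :
    ∃ z, z ≠ x ∧ z ≠ w ∧ s = {x, w, z} := by
  obtain ⟨a, b, c, hab, hac, hbc, rfl⟩ := Set.ncard_eq_three.mp hs
  simp only [Set.mem_insert_iff, Set.mem_singleton_iff] at hx hw
  rcases hx with rfl | rfl | rfl <;> rcases hw with rfl | rfl | rfl <;>
    first
    | exact absurd rfl hxw
    | (refine ⟨c, ?_, ?_, ?_⟩ <;> first | tauto | (ext t; simp; tauto))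
    | (refine ⟨b, ?_, ?_, ?_⟩ <;> first | tauto | (ext t; simp; tauto))
    | (refine ⟨a, ?_, ?_, ?_⟩ <;> first | tauto | (ext t; simp; tauto))

section VS

variable (G : SimpleGraph V) (M : Fin 3 → G.Subgraph)

lemma vs2 (hG : IsCubic G) (hM : ∀ i, (M i).IsPerfectMatching)
    (h3 : ∀ e ∈ G.edgeSet, coverCount G M e ≠ 3)
    (v x : V) (hadj : G.Adj v x) (h2 : coverCount G M s(v, x) = 2) :
    ∃ y z, x ≠ y ∧ x ≠ z ∧ y ≠ z ∧ G.Adj v y ∧ G.Adj v z ∧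
      coverCount G M s(v, y) = 0 ∧ coverCount G M s(v, z) = 1 ∧
      (∀ u, G.Adj v u → u = x ∨ u = y ∨ u = z) := by
  have hpm : ∀ i w, ∃! u, (M i).Adj w u :=
    fun i w => ((M i).isPerfectMatching_iff).mp (hM i) w
  obtain ⟨i, j, hij, hfib⟩ := Set.ncard_eq_two.mp h2
  have hiM : s(v, x) ∈ (M i).edgeSet := by
    have : i ∈ {l : Fin 3 | s(v, x) ∈ (M l).edgeSet} := by rw [hfib]; simp
    exact this
  have hjM : s(v, x) ∈ (M j).edgeSet := by
    have : j ∈ {l : Fin 3 | s(v, x) ∈ (M l).edgeSet} := by rw [hfib]; simp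
    exact this
  obtain ⟨k, hki, hkj, hall⟩ := fin3_third i j hij
  obtain ⟨w, hw, hwu⟩ := hpm k v
  have hwx : w ≠ x := by
    rintro rfl
    have : k ∈ {l : Fin 3 | s(v, w) ∈ (M l).edgeSet} := hw
    rw [hfib] at this
    rcases this with rfl | rfl
    · exact hki rfl
    · exact hkj rfl
  have hxnb : x ∈ G.neighborSet v := hadj
  have hwnb : w ∈ G.neighborSet v := (M k).adj_sub hw
  obtain ⟨z, hzx, hzw, hset⟩ := set_three_mem _ (hG v) x w hxnb hwnb (Ne.symm hwx)
  have hznb : z ∈ G.neighborSet v := by rw [hset]; simp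
  -- count of s(v,w) is 1
  have hcw : coverCount G M s(v, w) = 1 := by
    have : {l : Fin 3 | s(v, w) ∈ (M l).edgeSet} = {k} := by
      ext l
      simp only [Set.mem_setOf_eq, Set.mem_singleton_iff]
      constructor
      · intro hl
        rcases hall l with rfl | rfl | rfl
        · exact absurd ((hpm l v).unique hl hiM) hwx
        · exact absurd ((hpm l v).unique hl hjM) hwx
        · rfl
      · rintro rfl; exact hw
    rw [coverCount, this, Set.ncard_singleton]
  -- count of s(v,z) is 0
  have hcz : coverCount G M s(v, z) = 0 := by
    rw [cnt_zero_iff]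
    intro l hl
    rcases hall l with rfl | rfl | rfl
    · exact hzx ((hpm l v).unique hl hiM)
    · exact hzx ((hpm l v).unique hl hjM)
    · exact hzw ((hpm l v).unique hl hw)
  refine ⟨z, w, Ne.symm hzx, hwx.symm, hzw, hznb, hwnb, hcz, hcw, ?_⟩
  · intro u hu
    have : u ∈ G.neighborSet v := hu
    rw [hset] at this
    simp only [Set.mem_insert_iff, Set.mem_singleton_iff] at this
    tauto
lemma vs0 (hG : IsCubic G) (hM : ∀ i, (M i).IsPerfectMatching)
    (h3 : ∀ e ∈ G.edgeSet, coverCount G M e ≠ 3)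
    (v y : V) (hadj : G.Adj v y) (h0 : coverCount G M s(v, y) = 0) :
    ∃ x, G.Adj v x ∧ coverCount G M s(v, x) = 2 := by
  have hpm : ∀ i w, ∃! u, (M i).Adj w u :=
    fun i w => ((M i).isPerfectMatching_iff).mp (hM i) w
  have hnot : ∀ i, ¬ (M i).Adj v y := by
    intro i hi
    exact (cnt_zero_iff G M _).mp h0 i hi
  obtain ⟨w0, hw0, _⟩ := hpm 0 v
  obtain ⟨w1, hw1, _⟩ := hpm 1 v
  obtain ⟨w2, hw2, _⟩ := hpm 2 v
  have hne0 : w0 ≠ y := fun h => hnot 0 (h ▸ hw0)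
  have hne1 : w1 ≠ y := fun h => hnot 1 (h ▸ hw1)
  have hne2 : w2 ≠ y := fun h => hnot 2 (h ▸ hw2)
  have hcnt2 : ∀ (w : V) (i j : Fin 3), i ≠ j → (M i).Adj v w → (M j).Adj v w →
      ∃ x, G.Adj v x ∧ coverCount G M s(v, x) = 2 := by
    intro w i j hij hi hj
    have hadj' : G.Adj v w := (M i).adj_sub hi
    exact ⟨w, hadj', cnt_two_of G M h3 _ hadj' i j hij hi hj⟩
  by_cases h01 : w0 = w1
  · exact hcnt2 w0 0 1 (by decide) hw0 (h01 ▸ hw1)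
  by_cases h02 : w0 = w2
  · exact hcnt2 w0 0 2 (by decide) hw0 (h02 ▸ hw2)
  by_cases h12 : w1 = w2
  · exact hcnt2 w1 1 2 (by decide) hw1 (h12 ▸ hw2)
  -- all distinct: contradiction with cubic
  exfalso
  have hsub : ({y, w0, w1, w2} : Set V) ⊆ G.neighborSet v := by
    intro t ht
    rcases ht with rfl | rfl | rfl | rfl
    · exact hadj
    · exact (M 0).adj_sub hw0
    · exact (M 1).adj_sub hw1
    · exact (M 2).adj_sub hw2
  have h4 : ({y, w0, w1, w2} : Set V).ncard = 4 := by
    rw [Set.ncard_insert_of_notMem (by simp [Ne.symm hne0, Ne.symm hne1, Ne.symm hne2])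
      (Set.toFinite _)]
    rw [Set.ncard_eq_three.mpr ⟨w0, w1, w2, h01, h02, h12, rfl⟩]
  have := Set.ncard_le_ncard hsub (Set.toFinite _)
  rw [h4, hG v] at this
  omega

lemma uniq2 (hM : ∀ i, (M i).IsPerfectMatching)
    (v x x' : V) (h2 : coverCount G M s(v, x) = 2) (h2' : coverCount G M s(v, x') = 2) :
    x = x' := by
  have hpm : ∀ i w, ∃! u, (M i).Adj w u :=
    fun i w => ((M i).isPerfectMatching_iff).mp (hM i) w
  by_contra hne
  have hd : Disjoint {l : Fin 3 | s(v, x) ∈ (M l).edgeSet}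
      {l : Fin 3 | s(v, x') ∈ (M l).edgeSet} := by
    rw [Set.disjoint_iff_inter_eq_empty]
    ext l
    simp only [Set.mem_inter_iff, Set.mem_setOf_eq, Set.mem_empty_iff_false, iff_false,
      not_and]
    intro hl hl'
    exact hne ((hpm l v).unique hl hl')
  have hu : ({l : Fin 3 | s(v, x) ∈ (M l).edgeSet} ∪
      {l : Fin 3 | s(v, x') ∈ (M l).edgeSet}).ncard = 4 := by
    rw [Set.ncard_union_eq hd (Set.toFinite _) (Set.toFinite _)]
    rw [coverCount] at h2 h2'
    omega
  have := Set.ncard_le_ncard (Set.subset_univ ({l : Fin 3 | s(v, x) ∈ (M l).edgeSet} ∪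
      {l : Fin 3 | s(v, x') ∈ (M l).edgeSet})) Set.finite_univ
  rw [hu, Set.ncard_univ] at this
  simp at this

lemma uniq0 (hG : IsCubic G) (hM : ∀ i, (M i).IsPerfectMatching)
    (h3 : ∀ e ∈ G.edgeSet, coverCount G M e ≠ 3)
    (v y y' : V) (hy : G.Adj v y) (hy' : G.Adj v y')
    (h0 : coverCount G M s(v, y) = 0) (h0' : coverCount G M s(v, y') = 0) :
    y = y' := by
  obtain ⟨x, hxadj, hx2⟩ := vs0 G M hG hM h3 v y hy h0
  obtain ⟨y0, z, hxy0, hxz, hy0z, hy0adj, hzadj, hc0, hc1, hcover⟩ :=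
    vs2 G M hG hM h3 v x hxadj hx2
  have key : ∀ u, G.Adj v u → coverCount G M s(v, u) = 0 → u = y0 := by
    intro u hu hcu
    rcases hcover u hu with rfl | rfl | rfl
    · rw [hx2] at hcu; omega
    · rfl
    · rw [hc1] at hcu; omega
  rw [key y hy h0, key y' hy' h0']

end VS

section Swap
set_option maxHeartbeats 1600000

variable (G : SimpleGraph V) (M : Fin 3 → G.Subgraph)

lemma swap6 (hM : ∀ i, (M i).IsPerfectMatching) (hdf : defect G = 3)
    (v1 v2 v3 v4 v5 v6 : V)
    (n12 : v1 ≠ v2) (n13 : v1 ≠ v3) (n14 : v1 ≠ v4) (n15 : v1 ≠ v5) (n16 : v1 ≠ v6)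
    (n23 : v2 ≠ v3) (n24 : v2 ≠ v4) (n25 : v2 ≠ v5) (n26 : v2 ≠ v6)
    (n34 : v3 ≠ v4) (n35 : v3 ≠ v5) (n36 : v3 ≠ v6)
    (n45 : v4 ≠ v5) (n46 : v4 ≠ v6) (n56 : v5 ≠ v6)
    (a12 : G.Adj v1 v2) (a34 : G.Adj v3 v4) (a56 : G.Adj v5 v6)
    (hU : uncovered G M = {s(v1, v2), s(v3, v4), s(v5, v6)})
    (a : Fin 3)
    (m61 : (M a).Adj v6 v1) (m23 : (M a).Adj v2 v3) (m45 : (M a).Adj v4 v5)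
    (c61 : coverCount G M s(v6, v1) = 2) (c23 : coverCount G M s(v2, v3) = 2)
    (c45 : coverCount G M s(v4, v5) = 2) : False := by
  classical
  have hpm : ∀ i w, ∃! u, (M i).Adj w u :=
    fun i w => ((M i).isPerfectMatching_iff).mp (hM i) w
  set S6 : Set V := {v1, v2, v3, v4, v5, v6} with hS6
  set A : Set (Sym2 V) := {s(v1, v2), s(v3, v4), s(v5, v6)} with hA
  have hAadj : ∀ x y : V, s(x, y) ∈ A → G.Adj x y := by
    intro x y hxy
    simp only [hA, Set.mem_insert_iff, Set.mem_singleton_iff, Sym2.eq_iff] at hxy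
    rcases hxy with (⟨rfl, rfl⟩ | ⟨rfl, rfl⟩) | (⟨rfl, rfl⟩ | ⟨rfl, rfl⟩) |
      (⟨rfl, rfl⟩ | ⟨rfl, rfl⟩)
    exacts [a12, a12.symm, a34, a34.symm, a56, a56.symm]
  have hAS6 : ∀ x y : V, s(x, y) ∈ A → x ∈ S6 := by
    intro x y hxy
    simp only [hA, Set.mem_insert_iff, Set.mem_singleton_iff, Sym2.eq_iff] at hxy
    simp only [hS6, Set.mem_insert_iff, Set.mem_singleton_iff]
    tauto
  let N : G.Subgraph := {
    verts := Set.univ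
    Adj := fun x y => ((M a).Adj x y ∧ x ∉ S6 ∧ y ∉ S6) ∨ s(x, y) ∈ A
    adj_sub := by
      rintro x y (⟨h, -, -⟩ | h)
      · exact (M a).adj_sub h
      · exact hAadj x y h
    edge_vert := fun _ => Set.mem_univ _
    symm := by
      constructor
      rintro x y (⟨h, h1, h2⟩ | h)
      · exact Or.inl ⟨h.symm, h2, h1⟩
      · right; rwa [Sym2.eq_swap]
  }
  have hNadj : ∀ x y : V, N.Adj x y ↔
      (((M a).Adj x y ∧ x ∉ S6 ∧ y ∉ S6) ∨ s(x, y) ∈ A) := fun x y => Iff.rfl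
  have hNpm : N.IsPerfectMatching := by
    rw [Subgraph.isPerfectMatching_iff]
    intro v
    by_cases hv : v ∈ S6
    · have key : ∀ u u' : V, u ∈ S6 → s(u, u') ∈ A → (∀ w, s(u, w) ∈ A → w = u') →
          ∃! w, N.Adj u w := by
        intro u u' hu hA1 huniq
        refine ⟨u', Or.inr hA1, ?_⟩
        rintro y (⟨-, hy, -⟩ | hy)
        · exact absurd hu hy
        · exact huniq y hy
      have hmemA : ∀ x y : V, s(x, y) ∈ A ↔
          ((x = v1 ∧ y = v2) ∨ (x = v2 ∧ y = v1)) ∨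
          ((x = v3 ∧ y = v4) ∨ (x = v4 ∧ y = v3)) ∨
          ((x = v5 ∧ y = v6) ∨ (x = v6 ∧ y = v5)) := by
        intro x y
        simp only [hA, Set.mem_insert_iff, Set.mem_singleton_iff, Sym2.eq_iff]
      simp only [hS6, Set.mem_insert_iff, Set.mem_singleton_iff] at hv
      have hS6mem : ∀ u : V, (u = v1 ∨ u = v2 ∨ u = v3 ∨ u = v4 ∨ u = v5 ∨ u = v6) →
          u ∈ S6 := by
        intro u hu; simp only [hS6, Set.mem_insert_iff, Set.mem_singleton_iff]; exact hu
      rcases hv with rfl | rfl | rfl | rfl | rfl | rfl <;>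
        [ (refine key _ v2 (hS6mem _ (by tauto)) ((hmemA _ _).mpr (by tauto)) ?_);
          (refine key _ v1 (hS6mem _ (by tauto)) ((hmemA _ _).mpr (by tauto)) ?_);
          (refine key _ v4 (hS6mem _ (by tauto)) ((hmemA _ _).mpr (by tauto)) ?_);
          (refine key _ v3 (hS6mem _ (by tauto)) ((hmemA _ _).mpr (by tauto)) ?_);
          (refine key _ v6 (hS6mem _ (by tauto)) ((hmemA _ _).mpr (by tauto)) ?_);
          (refine key _ v5 (hS6mem _ (by tauto)) ((hmemA _ _).mpr (by tauto)) ?_)] <;>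
        · intro w hw
          rcases (hmemA _ _).mp hw with (⟨h1, h2⟩ | ⟨h1, h2⟩) | (⟨h1, h2⟩ | ⟨h1, h2⟩) |
            (⟨h1, h2⟩ | ⟨h1, h2⟩) <;>
            first
            | exact h2
            | exact absurd h1 n12 | exact absurd h1 n13 | exact absurd h1 n14
            | exact absurd h1 n15 | exact absurd h1 n16 | exact absurd h1 n23
            | exact absurd h1 n24 | exact absurd h1 n25 | exact absurd h1 n26
            | exact absurd h1 n34 | exact absurd h1 n35 | exact absurd h1 n36
            | exact absurd h1 n45 | exact absurd h1 n46 | exact absurd h1 n56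
            | exact absurd h1 (Ne.symm n12) | exact absurd h1 (Ne.symm n13)
            | exact absurd h1 (Ne.symm n14) | exact absurd h1 (Ne.symm n15)
            | exact absurd h1 (Ne.symm n16) | exact absurd h1 (Ne.symm n23)
            | exact absurd h1 (Ne.symm n24) | exact absurd h1 (Ne.symm n25)
            | exact absurd h1 (Ne.symm n26) | exact absurd h1 (Ne.symm n34)
            | exact absurd h1 (Ne.symm n35) | exact absurd h1 (Ne.symm n36)
            | exact absurd h1 (Ne.symm n45) | exact absurd h1 (Ne.symm n46)
            | exact absurd h1 (Ne.symm n56)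
    · obtain ⟨pw, hpw, hpwu⟩ := hpm a v
      have hvS6 : ∀ u : V, (u = v1 ∨ u = v2 ∨ u = v3 ∨ u = v4 ∨ u = v5 ∨ u = v6) →
          u ∈ S6 := by
        intro u hu; simp only [hS6, Set.mem_insert_iff, Set.mem_singleton_iff]; exact hu
      have hpwS : pw ∉ S6 := by
        intro hmem
        simp only [hS6, Set.mem_insert_iff, Set.mem_singleton_iff] at hmem
        rcases hmem with rfl | rfl | rfl | rfl | rfl | rfl
        · exact hv (hvS6 v (by rw [(hpm a pw).unique hpw.symm m61.symm]; tauto))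
        · exact hv (hvS6 v (by rw [(hpm a pw).unique hpw.symm m23]; tauto))
        · exact hv (hvS6 v (by rw [(hpm a pw).unique hpw.symm m23.symm]; tauto))
        · exact hv (hvS6 v (by rw [(hpm a pw).unique hpw.symm m45]; tauto))
        · exact hv (hvS6 v (by rw [(hpm a pw).unique hpw.symm m45.symm]; tauto))
        · exact hv (hvS6 v (by rw [(hpm a pw).unique hpw.symm m61]; tauto))
      refine ⟨pw, Or.inl ⟨hpw, hv, hpwS⟩, ?_⟩
      rintro y (⟨h, -, -⟩ | hy)
      · exact hpwu y h
      · exact absurd (hAS6 v y hy) hv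
  let M' : Fin 3 → G.Subgraph := Function.update M a N
  have hM' : ∀ i, (M' i).IsPerfectMatching := by
    intro i
    by_cases hia : i = a
    · subst hia; simp only [M', Function.update_self]; exact hNpm
    · simp only [M', Function.update_of_ne hia]; exact hM i
  have hemp : uncovered G M' = ∅ := by
    ext e
    simp only [Set.mem_empty_iff_false, iff_false]
    rintro ⟨heG, hnone⟩
    obtain ⟨x, y, rfl⟩ := sym2_rep e
    have hxy : G.Adj x y := heG
    have hN : ¬ N.Adj x y := by
      have h := hnone a
      simp only [M', Function.update_self] at h
      exact fun hc => h hc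
    have hMi : ∀ i, i ≠ a → s(x, y) ∉ (M i).edgeSet := by
      intro i hi
      have h := hnone i
      simpa only [M', Function.update_of_ne hi] using h
    by_cases hxyA : s(x, y) ∈ A
    · exact hN (Or.inr hxyA)
    by_cases hxyM : s(x, y) ∈ (M a).edgeSet
    · have hMxy : (M a).Adj x y := hxyM
      have hS : x ∈ S6 ∨ y ∈ S6 := by
        by_contra hc
        push_neg at hc
        exact hN (Or.inl ⟨hMxy, hc.1, hc.2⟩)
      have hfin : ∀ z w' d : V, (M a).Adj z w' → (M a).Adj z d →
          coverCount G M s(z, d) = 2 →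
          (∀ i, i ≠ a → s(z, w') ∉ (M i).edgeSet) → False := by
        intro z w' d h1 h2 hc hni
        have hwd : w' = d := (hpm a z).unique h1 h2
        subst hwd
        obtain ⟨i, j, hij, hfib⟩ := Set.ncard_eq_two.mp hc
        have hi : s(z, w') ∈ (M i).edgeSet := by
          have h : i ∈ {l : Fin 3 | s(z, w') ∈ (M l).edgeSet} := by rw [hfib]; simp
          exact h
        have hj : s(z, w') ∈ (M j).edgeSet := by
          have h : j ∈ {l : Fin 3 | s(z, w') ∈ (M l).edgeSet} := by rw [hfib]; simp
          exact h
        by_cases hia : i = a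
        · exact hni j (fun hja => hij (hja ▸ hia ▸ rfl)) hj
        · exact hni i hia hi
      rcases hS with hxS | hyS
      · simp only [hS6, Set.mem_insert_iff, Set.mem_singleton_iff] at hxS
        rcases hxS with rfl | rfl | rfl | rfl | rfl | rfl
        · exact hfin _ y v6 hMxy m61.symm
            (by rw [show s(x, v6) = s(v6, x) from Sym2.eq_swap]; exact c61) hMi
        · exact hfin _ y v3 hMxy m23 c23 hMi
        · exact hfin _ y v2 hMxy m23.symm
            (by rw [show s(x, v2) = s(v2, x) from Sym2.eq_swap]; exact c23) hMi
        · exact hfin _ y v5 hMxy m45 c45 hMi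
        · exact hfin _ y v4 hMxy m45.symm
            (by rw [show s(x, v4) = s(v4, x) from Sym2.eq_swap]; exact c45) hMi
        · exact hfin _ y v1 hMxy m61 c61 hMi
      · have hMi' : ∀ i, i ≠ a → s(y, x) ∉ (M i).edgeSet := by
          intro i hi
          rw [show s(y, x) = s(x, y) from Sym2.eq_swap]
          exact hMi i hi
        simp only [hS6, Set.mem_insert_iff, Set.mem_singleton_iff] at hyS
        rcases hyS with rfl | rfl | rfl | rfl | rfl | rfl
        · exact hfin _ x v6 hMxy.symm m61.symm
            (by rw [show s(y, v6) = s(v6, y) from Sym2.eq_swap]; exact c61) hMi'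
        · exact hfin _ x v3 hMxy.symm m23 c23 hMi'
        · exact hfin _ x v2 hMxy.symm m23.symm
            (by rw [show s(y, v2) = s(v2, y) from Sym2.eq_swap]; exact c23) hMi'
        · exact hfin _ x v5 hMxy.symm m45 c45 hMi'
        · exact hfin _ x v4 hMxy.symm m45.symm
            (by rw [show s(y, v4) = s(v4, y) from Sym2.eq_swap]; exact c45) hMi'
        · exact hfin _ x v1 hMxy.symm m61 c61 hMi'
    · have hmemU : s(x, y) ∈ uncovered G M := by
        refine ⟨heG, fun i => ?_⟩
        by_cases hia : i = a
        · subst hia; exact hxyM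
        · exact hMi i hia
      rw [hU] at hmemU
      exact hxyA hmemU
  have hmem : (0 : ℕ) ∈ {n : ℕ | ∃ M0 : Fin 3 → G.Subgraph,
      (∀ i, (M0 i).IsPerfectMatching) ∧ n = (uncovered G M0).ncard} :=
    ⟨M', hM', by rw [hemp]; simp⟩
  have hle : defect G ≤ 0 := Nat.sInf_le hmem
  omega

end Swap

lemma chord_pairs (G : SimpleGraph V) (M : Fin 3 → G.Subgraph)
    (hM : ∀ i, (M i).IsPerfectMatching) (u w du dw : V)
    (h1 : coverCount G M s(u, w) = 1)
    (h2u : coverCount G M s(u, du) = 2) (h2w : coverCount G M s(w, dw) = 2) :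
    {i : Fin 3 | s(u, du) ∈ (M i).edgeSet} = {i : Fin 3 | s(w, dw) ∈ (M i).edgeSet} := by
  have hpm : ∀ i z, ∃! y, (M i).Adj z y :=
    fun i z => ((M i).isPerfectMatching_iff).mp (hM i) z
  obtain ⟨j, hj⟩ := Set.ncard_eq_one.mp h1
  have hjm : s(u, w) ∈ (M j).edgeSet := by
    have h : j ∈ {l : Fin 3 | s(u, w) ∈ (M l).edgeSet} := by rw [hj]; simp
    exact h
  have hju : j ∉ {i : Fin 3 | s(u, du) ∈ (M i).edgeSet} := by
    intro hmem
    have heq : w = du := (hpm j u).unique hjm hmem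
    subst heq
    rw [h2u] at h1
    omega
  have hjw : j ∉ {i : Fin 3 | s(w, dw) ∈ (M i).edgeSet} := by
    intro hmem
    have hjm' : (M j).Adj w u := (Subgraph.mem_edgeSet.mp hjm).symm
    have heq : u = dw := (hpm j w).unique hjm' hmem
    subst heq
    rw [show s(w, u) = s(u, w) from Sym2.eq_swap, h1] at h2w
    omega
  exact pair_eq_of_not_mem _ _ h2u h2w j hju hjw

lemma ncard_triple {α : Type} (a b c : α) (hab : a ≠ b) (hac : a ≠ c) (hbc : b ≠ c) :
    ({a, b, c} : Set α).ncard = 3 :=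
  Set.ncard_eq_three.mpr ⟨a, b, c, hab, hac, hbc, rfl⟩

set_option maxHeartbeats 3200000 in
theorem stmt_12 (G : SimpleGraph V) (hG : IsCubic G) (hdf : defect G = 3)
    (M : Fin 3 → G.Subgraph) (hM : ∀ i, (M i).IsPerfectMatching)
    (hopt : (uncovered G M).ncard = 3)
    (h3 : ∀ e ∈ G.edgeSet, coverCount G M e ≠ 3) :
    ∃ (v : V) (p : G.Walk v v), p.IsCycle ∧ p.length = 6 ∧
      coreEdges G M = {e | e ∈ p.edges} ∧
      ∀ u w : V, u ∈ p.support → w ∈ p.support → G.Adj u w → s(u, w) ∈ p.edges := by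
  classical
  have hne : (uncovered G M).Nonempty := Set.nonempty_of_ncard_ne_zero (by rw [hopt]; omega)
  obtain ⟨e1, he1⟩ := hne
  obtain ⟨v1, v2, rfl⟩ := sym2_rep e1
  have a12 : G.Adj v1 v2 := G.mem_edgeSet.mp he1.1
  have ha1 : coverCount G M s(v1, v2) = 0 := (cnt_zero_iff G M _).mpr he1.2
  have n12 : v1 ≠ v2 := a12.ne
  have ha1' : coverCount G M s(v2, v1) = 0 := by
    rw [show s(v2, v1) = s(v1, v2) from Sym2.eq_swap]; exact ha1
  -- v3 : double partner of v2
  obtain ⟨v3, a23, hd2⟩ := vs0 G M hG hM h3 v2 v1 a12.symm ha1'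
  have n23 : v2 ≠ v3 := a23.ne
  have n13 : v1 ≠ v3 := by intro hh; rw [← hh, ha1'] at hd2; omega
  have hd2' : coverCount G M s(v3, v2) = 2 := by
    rw [show s(v3, v2) = s(v2, v3) from Sym2.eq_swap]; exact hd2
  -- v4 : uncovered partner of v3
  obtain ⟨v4, z3, n24, n2z3, n4z3, a34, az3, ha2, hz3, hcov3⟩ :=
    vs2 G M hG hM h3 v3 v2 a23.symm hd2'
  have n34 : v3 ≠ v4 := a34.ne
  have ha2' : coverCount G M s(v4, v3) = 0 := by
    rw [show s(v4, v3) = s(v3, v4) from Sym2.eq_swap]; exact ha2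
  have n14 : v1 ≠ v4 := by
    intro hh
    have h03 : coverCount G M s(v1, v3) = 0 := by
      rw [show s(v1, v3) = s(v3, v1) from Sym2.eq_swap, hh]; exact ha2
    exact n23 (uniq0 G M hG hM h3 v1 v2 v3 a12 (hh ▸ a34.symm) ha1 h03)
  -- v5 : double partner of v4
  obtain ⟨v5, a45, hd3⟩ := vs0 G M hG hM h3 v4 v3 a34.symm ha2'
  have n45 : v4 ≠ v5 := a45.ne
  have n35 : v3 ≠ v5 := by intro hh; rw [← hh, ha2'] at hd3; omega
  have hd3'' : coverCount G M s(v5, v4) = 2 := by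
    rw [show s(v5, v4) = s(v4, v5) from Sym2.eq_swap]; exact hd3
  have n25 : v2 ≠ v5 := by
    intro hh
    have h2' : coverCount G M s(v2, v4) = 2 := by
      rw [show s(v2, v4) = s(v4, v2) from Sym2.eq_swap, hh]; exact hd3
    exact n34 (uniq2 G M hM v2 v3 v4 hd2 h2')
  have n15 : v1 ≠ v5 := by
    rintro rfl
    -- core would contain a 4-cycle v1 v2 v3 v4; the third uncovered edge has no home
    have hd3s : coverCount G M s(v1, v4) = 2 := by
      rw [show s(v1, v4) = s(v4, v1) from Sym2.eq_swap]; exact hd3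
    have hane : (s(v1, v2) : Sym2 V) ≠ s(v3, v4) := by
      rw [Ne, Sym2.eq_iff]
      rintro (⟨h, -⟩ | ⟨h, -⟩)
      · exact n13 h
      · exact n14 h
    have hlt : ({s(v1, v2), s(v3, v4)} : Set (Sym2 V)).ncard < (uncovered G M).ncard := by
      rw [Set.ncard_pair hane, hopt]; omega
    obtain ⟨e3, he3U, he3n⟩ := Set.exists_mem_notMem_of_ncard_lt_ncard hlt
    obtain ⟨x, y, rfl⟩ := sym2_rep e3
    have axy : G.Adj x y := G.mem_edgeSet.mp he3U.1
    have h0xy : coverCount G M s(x, y) = 0 := (cnt_zero_iff G M _).mpr he3U.2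
    have h0yx : coverCount G M s(y, x) = 0 := by
      rw [show s(y, x) = s(x, y) from Sym2.eq_swap]; exact h0xy
    have hUeq : uncovered G M = {s(v1, v2), s(v3, v4), s(x, y)} := by
      symm
      apply Set.eq_of_subset_of_ncard_le
      · rintro e (rfl | rfl | rfl)
        · exact he1
        · exact ⟨G.mem_edgeSet.mpr a34, (cnt_zero_iff G M _).mp ha2⟩
        · exact he3U
      · rw [hopt, ncard_triple _ _ _ hane
          (fun h => he3n (h ▸ Set.mem_insert _ _))
          (fun h => he3n (h ▸ Set.mem_insert_of_mem _ rfl))]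
      · exact Set.toFinite _
    have houtx : ∀ z t : V, G.Adj z t → coverCount G M s(z, t) = 0 →
        s(z, t) ∉ ({s(v1, v2), s(v3, v4)} : Set (Sym2 V)) →
        z ≠ v1 ∧ z ≠ v2 ∧ z ≠ v3 ∧ z ≠ v4 := by
      intro z t hzt h0 hnm
      refine ⟨?_, ?_, ?_, ?_⟩
      · intro hz
        rw [hz] at hzt h0
        have ht := uniq0 G M hG hM h3 v1 t v2 hzt a12 h0 ha1
        exact hnm (by rw [hz, ht]; exact Set.mem_insert _ _)
      · intro hz
        rw [hz] at hzt h0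
        have ht := uniq0 G M hG hM h3 v2 t v1 hzt a12.symm h0 ha1'
        exact hnm (by
          rw [hz, ht, show s(v2, v1) = s(v1, v2) from Sym2.eq_swap]
          exact Set.mem_insert _ _)
      · intro hz
        rw [hz] at hzt h0
        have ht := uniq0 G M hG hM h3 v3 t v4 hzt a34 h0 ha2
        exact hnm (by rw [hz, ht]; exact Set.mem_insert_of_mem _ rfl)
      · intro hz
        rw [hz] at hzt h0
        have ht := uniq0 G M hG hM h3 v4 t v3 hzt a34.symm h0 ha2'
        exact hnm (by
          rw [hz, ht, show s(v4, v3) = s(v3, v4) from Sym2.eq_swap]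
          exact Set.mem_insert_of_mem _ rfl)
    obtain ⟨hx1, hx2, hx3, hx4⟩ := houtx x y axy h0xy he3n
    have he3n' : s(y, x) ∉ ({s(v1, v2), s(v3, v4)} : Set (Sym2 V)) := by
      rw [show s(y, x) = s(x, y) from Sym2.eq_swap]; exact he3n
    obtain ⟨hy1, hy2, hy3, hy4⟩ := houtx y x axy.symm h0yx he3n'
    obtain ⟨w, axw, hw2⟩ := vs0 G M hG hM h3 x y axy h0xy
    have hwx2 : coverCount G M s(w, x) = 2 := by
      rw [show s(w, x) = s(x, w) from Sym2.eq_swap]; exact hw2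
    have hwn1 : w ≠ v1 := fun hh => hx4 (uniq2 G M hM v1 x v4 (hh ▸ hwx2) hd3s)
    have hwn2 : w ≠ v2 := fun hh => hx3 (uniq2 G M hM v2 x v3 (hh ▸ hwx2) hd2)
    have hwn3 : w ≠ v3 := fun hh => hx2 (uniq2 G M hM v3 x v2 (hh ▸ hwx2) hd2')
    have hwn4 : w ≠ v4 := fun hh => hx1 (uniq2 G M hM v4 x v1 (hh ▸ hwx2) hd3)
    obtain ⟨y', z', hy'1, hy'2, hy'3, awy', az', h0wy', hz', hcovw⟩ :=
      vs2 G M hG hM h3 w x axw.symm hwx2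
    have hmem : s(w, y') ∈ uncovered G M := ⟨G.mem_edgeSet.mpr awy', (cnt_zero_iff G M _).mp h0wy'⟩
    rw [hUeq] at hmem
    simp only [Set.mem_insert_iff, Set.mem_singleton_iff, Sym2.eq_iff] at hmem
    rcases hmem with (⟨h, -⟩ | ⟨h, -⟩) | (⟨h, -⟩ | ⟨h, -⟩) | (⟨hh, -⟩ | ⟨hh, -⟩)
    · exact hwn1 h
    · exact hwn2 h
    · exact hwn3 h
    · exact hwn4 h
    · exact G.loopless.irrefl x (hh ▸ axw)
    · rw [hh, h0yx] at hwx2; omega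
  -- v6 : uncovered partner of v5
  obtain ⟨v6, z5, n46, n4z5, n6z5, a56, az5, ha3, hz5, hcov5⟩ :=
    vs2 G M hG hM h3 v5 v4 a45.symm hd3''
  have n56 : v5 ≠ v6 := a56.ne
  have ha3' : coverCount G M s(v6, v5) = 0 := by
    rw [show s(v6, v5) = s(v5, v6) from Sym2.eq_swap]; exact ha3
  have n36 : v3 ≠ v6 := by
    rintro rfl
    exact n45 (uniq0 G M hG hM h3 v3 v5 v4 a56.symm a34 ha3' ha2).symm
  have n26 : v2 ≠ v6 := by
    rintro rfl
    exact n15 (uniq0 G M hG hM h3 v2 v5 v1 a56.symm a12.symm ha3' ha1').symm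
  have n16 : v1 ≠ v6 := by
    rintro rfl
    exact n25 (uniq0 G M hG hM h3 v1 v5 v2 a56.symm a12 ha3' ha1).symm
  -- the uncovered edges are exactly the three found
  have hE12 : (s(v1, v2) : Sym2 V) ≠ s(v3, v4) := by
    rw [Ne, Sym2.eq_iff]
    rintro (⟨h, -⟩ | ⟨h, -⟩)
    · exact n13 h
    · exact n14 h
  have hE13 : (s(v1, v2) : Sym2 V) ≠ s(v5, v6) := by
    rw [Ne, Sym2.eq_iff]
    rintro (⟨h, -⟩ | ⟨h, -⟩)
    · exact n15 h
    · exact n16 h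
  have hE23 : (s(v3, v4) : Sym2 V) ≠ s(v5, v6) := by
    rw [Ne, Sym2.eq_iff]
    rintro (⟨h, -⟩ | ⟨h, -⟩)
    · exact n35 h
    · exact n36 h
  have hUset : uncovered G M = {s(v1, v2), s(v3, v4), s(v5, v6)} := by
    symm
    apply Set.eq_of_subset_of_ncard_le
    · rintro e (rfl | rfl | rfl)
      · exact he1
      · exact ⟨G.mem_edgeSet.mpr a34, (cnt_zero_iff G M _).mp ha2⟩
      · exact ⟨G.mem_edgeSet.mpr a56, (cnt_zero_iff G M _).mp ha3⟩
    · rw [hopt, ncard_triple _ _ _ hE12 hE13 hE23]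
    · exact Set.toFinite _
  -- close the cycle: double partner of v6 is v1
  obtain ⟨w, a6w, hw2⟩ := vs0 G M hG hM h3 v6 v5 a56.symm ha3'
  have hw2s : coverCount G M s(w, v6) = 2 := by
    rw [show s(w, v6) = s(v6, w) from Sym2.eq_swap]; exact hw2
  have hwn2 : w ≠ v2 := by
    intro hh
    have h2' : coverCount G M s(v2, v6) = 2 := by
      rw [show s(v2, v6) = s(v6, v2) from Sym2.eq_swap, ← hh]; exact hw2
    exact n36 (uniq2 G M hM v2 v6 v3 h2' hd2).symm
  have hwn3 : w ≠ v3 := by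
    intro hh
    have h2' : coverCount G M s(v3, v6) = 2 := by
      rw [show s(v3, v6) = s(v6, v3) from Sym2.eq_swap, ← hh]; exact hw2
    exact n26 (uniq2 G M hM v3 v6 v2 h2' hd2').symm
  have hwn4 : w ≠ v4 := by
    intro hh
    have h2' : coverCount G M s(v4, v6) = 2 := by
      rw [show s(v4, v6) = s(v6, v4) from Sym2.eq_swap, ← hh]; exact hw2
    exact n56 (uniq2 G M hM v4 v6 v5 h2' hd3).symm
  have hwn5 : w ≠ v5 := by intro hh; rw [hh, ha3'] at hw2; omega
  have hwv1 : w = v1 := by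
    by_contra hwn1
    obtain ⟨y', z', hy'1, hy'2, hy'3, awy', az', h0wy', hz', hcovw⟩ :=
      vs2 G M hG hM h3 w v6 a6w.symm hw2s
    have hmem : s(w, y') ∈ uncovered G M := ⟨G.mem_edgeSet.mpr awy', (cnt_zero_iff G M _).mp h0wy'⟩
    rw [hUset] at hmem
    simp only [Set.mem_insert_iff, Set.mem_singleton_iff, Sym2.eq_iff] at hmem
    rcases hmem with (⟨h, -⟩ | ⟨h, -⟩) | (⟨h, -⟩ | ⟨h, -⟩) | (⟨h, -⟩ | ⟨h, -⟩)
    · exact hwn1 h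
    · exact hwn2 h
    · exact hwn3 h
    · exact hwn4 h
    · exact hwn5 h
    · exact a6w.ne h.symm
  rw [hwv1] at a6w hw2
  have hd1 : coverCount G M s(v6, v1) = 2 := hw2
  have hd1' : coverCount G M s(v1, v6) = 2 := by
    rw [show s(v1, v6) = s(v6, v1) from Sym2.eq_swap]; exact hd1
  have a61 : G.Adj v6 v1 := a6w
  -- membership characterisations
  have hin0 : ∀ e, e ∈ G.edgeSet → coverCount G M e = 0 →
      e = s(v1, v2) ∨ e = s(v3, v4) ∨ e = s(v5, v6) := by
    intro e heG h0
    have hmem : e ∈ uncovered G M := ⟨heG, (cnt_zero_iff G M _).mp h0⟩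
    rw [hUset] at hmem
    simpa using hmem
  have hin2 : ∀ x y : V, G.Adj x y → coverCount G M s(x, y) = 2 →
      s(x, y) = s(v6, v1) ∨ s(x, y) = s(v2, v3) ∨ s(x, y) = s(v4, v5) := by
    intro x y hxy h2
    obtain ⟨y0, z0, hxy0, hxz0, hy0z0, ay0, az0, h00, hz0, hcov0⟩ :=
      vs2 G M hG hM h3 x y hxy h2
    have hm : s(x, y0) ∈ uncovered G M := ⟨G.mem_edgeSet.mpr ay0, (cnt_zero_iff G M _).mp h00⟩
    rw [hUset] at hm
    have hx6 : x = v1 ∨ x = v2 ∨ x = v3 ∨ x = v4 ∨ x = v5 ∨ x = v6 := by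
      simp only [Set.mem_insert_iff, Set.mem_singleton_iff, Sym2.eq_iff] at hm
      tauto
    rcases hx6 with h | h | h | h | h | h
    · left; rw [h, uniq2 G M hM v1 y v6 (h ▸ h2) hd1']; exact Sym2.eq_swap
    · right; left; rw [h, uniq2 G M hM v2 y v3 (h ▸ h2) hd2]
    · right; left; rw [h, uniq2 G M hM v3 y v2 (h ▸ h2) hd2']; exact Sym2.eq_swap
    · right; right; rw [h, uniq2 G M hM v4 y v5 (h ▸ h2) hd3]
    · right; right; rw [h, uniq2 G M hM v5 y v4 (h ▸ h2) hd3'']; exact Sym2.eq_swap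
    · left; rw [h, uniq2 G M hM v6 y v1 (h ▸ h2) hd1]
  -- Q-set machinery for chords
  have eQv1 : {i : Fin 3 | s(v1, v6) ∈ (M i).edgeSet} = {i : Fin 3 | s(v6, v1) ∈ (M i).edgeSet} := by
    rw [show s(v1, v6) = s(v6, v1) from Sym2.eq_swap]
  have eQv2 : {i : Fin 3 | s(v2, v3) ∈ (M i).edgeSet} = {i : Fin 3 | s(v2, v3) ∈ (M i).edgeSet} := rfl
  have eQv3 : {i : Fin 3 | s(v3, v2) ∈ (M i).edgeSet} = {i : Fin 3 | s(v2, v3) ∈ (M i).edgeSet} := by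
    rw [show s(v3, v2) = s(v2, v3) from Sym2.eq_swap]
  have eQv4 : {i : Fin 3 | s(v4, v5) ∈ (M i).edgeSet} = {i : Fin 3 | s(v4, v5) ∈ (M i).edgeSet} := rfl
  have eQv5 : {i : Fin 3 | s(v5, v4) ∈ (M i).edgeSet} = {i : Fin 3 | s(v4, v5) ∈ (M i).edgeSet} := by
    rw [show s(v5, v4) = s(v4, v5) from Sym2.eq_swap]
  have eQv6 : {i : Fin 3 | s(v6, v1) ∈ (M i).edgeSet} = {i : Fin 3 | s(v6, v1) ∈ (M i).edgeSet} := rfl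
  have hnc1 : {i : Fin 3 | s(v6, v1) ∈ (M i).edgeSet}.ncard = 2 := hd1
  have hnc2 : {i : Fin 3 | s(v2, v3) ∈ (M i).edgeSet}.ncard = 2 := hd2
  have hnc3 : {i : Fin 3 | s(v4, v5) ∈ (M i).edgeSet}.ncard = 2 := hd3
  have hswap6 : ∀ b : Fin 3, s(v6, v1) ∈ (M b).edgeSet → s(v2, v3) ∈ (M b).edgeSet →
      s(v4, v5) ∈ (M b).edgeSet → False := by
    intro b hb1 hb2 hb3
    exact swap6 G M hM hdf v1 v2 v3 v4 v5 v6 n12 n13 n14 n15 n16 n23 n24 n25 n26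
      n34 n35 n36 n45 n46 n56 a12 a34 a56 hUset b hb1 hb2 hb3 hd1 hd2 hd3
  have hQ12 : {i : Fin 3 | s(v6, v1) ∈ (M i).edgeSet} ≠ {i : Fin 3 | s(v2, v3) ∈ (M i).edgeSet} := by
    intro hq
    obtain ⟨b, hb1, hb3⟩ := pair_inter_nonempty _ _ hnc1 hnc3
    have hb2 : b ∈ {i : Fin 3 | s(v2, v3) ∈ (M i).edgeSet} := by rw [← hq]; exact hb1
    exact hswap6 b hb1 hb2 hb3
  have hQ13 : {i : Fin 3 | s(v6, v1) ∈ (M i).edgeSet} ≠ {i : Fin 3 | s(v4, v5) ∈ (M i).edgeSet} := by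
    intro hq
    obtain ⟨b, hb1, hb2⟩ := pair_inter_nonempty _ _ hnc1 hnc2
    have hb3 : b ∈ {i : Fin 3 | s(v4, v5) ∈ (M i).edgeSet} := by rw [← hq]; exact hb1
    exact hswap6 b hb1 hb2 hb3
  have hQ23 : {i : Fin 3 | s(v2, v3) ∈ (M i).edgeSet} ≠ {i : Fin 3 | s(v4, v5) ∈ (M i).edgeSet} := by
    intro hq
    obtain ⟨c, hc1, hc2⟩ := pair_inter_nonempty _ _ hnc1 hnc2
    have hc3 : c ∈ {i : Fin 3 | s(v4, v5) ∈ (M i).edgeSet} := by rw [← hq]; exact hc2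
    exact hswap6 c hc1 hc2 hc3
  refine ⟨v1, Walk.cons a12 (Walk.cons a23 (Walk.cons a34 (Walk.cons a45
    (Walk.cons a56 (Walk.cons a61 Walk.nil))))), ?_, ?_, ?_, ?_⟩
  · rw [Walk.isCycle_def]
    refine ⟨?_, by simp, ?_⟩
    · rw [Walk.isTrail_def]
      simp only [Walk.edges_cons, Walk.edges_nil, List.nodup_cons, List.mem_cons,
        List.not_mem_nil, or_false, List.nodup_nil, and_true, Sym2.eq_iff, not_or]
      exact ⟨⟨⟨fun h => n12 h.1, fun h => n13 h⟩,
         ⟨fun h => n13 h.1, fun h => n14 h.1⟩,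
         ⟨fun h => n14 h.1, fun h => n15 h.1⟩,
         ⟨fun h => n15 h.1, fun h => n16 h.1⟩,
         fun h => n16 h.1, fun h => n26 h.2⟩,
        ⟨⟨fun h => n23 h.1, fun h => n24 h⟩,
         ⟨fun h => n24 h.1, fun h => n25 h.1⟩,
         ⟨fun h => n25 h.1, fun h => n26 h.1⟩,
         fun h => n26 h.1, fun h => n12 h.1.symm⟩,
        ⟨⟨fun h => n34 h.1, fun h => n35 h⟩,
         ⟨fun h => n35 h.1, fun h => n36 h.1⟩,
         fun h => n36 h.1, fun h => n13 h.1.symm⟩,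
        ⟨⟨fun h => n45 h.1, fun h => n46 h⟩,
         fun h => n46 h.1, fun h => n14 h.1.symm⟩,
        ⟨fun h => n56 h.1, fun h => n15 h.symm⟩, not_false⟩
    · simp only [Walk.support_cons, Walk.support_nil, List.tail_cons, List.nodup_cons,
        List.mem_cons, List.not_mem_nil, or_false, List.nodup_nil, and_true, not_or,
        List.mem_singleton]
      exact ⟨⟨n23, n24, n25, n26, fun h => n12 h.symm⟩,
        ⟨n34, n35, n36, fun h => n13 h.symm⟩,
        ⟨n45, n46, fun h => n14 h.symm⟩,
        ⟨n56, fun h => n15 h.symm⟩, fun h => n16 h.symm, not_false⟩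
  · simp
  · ext e
    simp only [coreEdges, Set.mem_setOf_eq, Walk.edges_cons, Walk.edges_nil,
      List.mem_cons, List.not_mem_nil, or_false]
    constructor
    · rintro ⟨heG, hne1⟩
      have hle := cnt_le_three G M e
      have h33 := h3 e heG
      have htri : coverCount G M e = 0 ∨ coverCount G M e = 2 := by omega
      rcases htri with h0 | h2
      · rcases hin0 e heG h0 with rfl | rfl | rfl
        · exact Or.inl rfl
        · exact Or.inr (Or.inr (Or.inl rfl))
        · exact Or.inr (Or.inr (Or.inr (Or.inr (Or.inl rfl))))
      · obtain ⟨x, y, rfl⟩ := sym2_rep e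
        rcases hin2 x y (G.mem_edgeSet.mp heG) h2 with h | h | h <;> rw [h]
        · exact Or.inr (Or.inr (Or.inr (Or.inr (Or.inr rfl))))
        · exact Or.inr (Or.inl rfl)
        · exact Or.inr (Or.inr (Or.inr (Or.inl rfl)))
    · intro hmem
      rcases hmem with rfl | rfl | rfl | rfl | rfl | rfl
      · exact ⟨a12, by rw [ha1]; omega⟩
      · exact ⟨a23, by rw [hd2]; omega⟩
      · exact ⟨a34, by rw [ha2]; omega⟩
      · exact ⟨a45, by rw [hd3]; omega⟩
      · exact ⟨a56, by rw [ha3]; omega⟩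
      · exact ⟨a61, by rw [hd1]; omega⟩
  · intro u w hu hw huw
    simp only [Walk.support_cons, Walk.support_nil, List.mem_cons, List.not_mem_nil,
      or_false, List.mem_singleton] at hu hw
    have hu6 : u = v1 ∨ u = v2 ∨ u = v3 ∨ u = v4 ∨ u = v5 ∨ u = v6 := by
      rcases hu with h | h | h | h | h | h | h
      exacts [Or.inl h, Or.inr (Or.inl h), Or.inr (Or.inr (Or.inl h)),
        Or.inr (Or.inr (Or.inr (Or.inl h))), Or.inr (Or.inr (Or.inr (Or.inr (Or.inl h)))),
        Or.inr (Or.inr (Or.inr (Or.inr (Or.inr h)))), Or.inl h]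
    have hw6 : w = v1 ∨ w = v2 ∨ w = v3 ∨ w = v4 ∨ w = v5 ∨ w = v6 := by
      rcases hw with h | h | h | h | h | h | h
      exacts [Or.inl h, Or.inr (Or.inl h), Or.inr (Or.inr (Or.inl h)),
        Or.inr (Or.inr (Or.inr (Or.inl h))), Or.inr (Or.inr (Or.inr (Or.inr (Or.inl h)))),
        Or.inr (Or.inr (Or.inr (Or.inr (Or.inr h)))), Or.inl h]
    have hle := cnt_le_three G M s(u, w)
    have h33 := h3 s(u, w) (G.mem_edgeSet.mpr huw)
    have htri : coverCount G M s(u, w) = 0 ∨ coverCount G M s(u, w) = 1 ∨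
        coverCount G M s(u, w) = 2 := by omega
    simp only [Walk.edges_cons, Walk.edges_nil, List.mem_cons, List.not_mem_nil, or_false]
    rcases htri with h0 | h1 | h2
    · rcases hin0 s(u, w) (G.mem_edgeSet.mpr huw) h0 with h | h | h <;> rw [h]
      · exact Or.inl rfl
      · exact Or.inr (Or.inr (Or.inl rfl))
      · exact Or.inr (Or.inr (Or.inr (Or.inr (Or.inl rfl))))
    · -- chord: impossible
      rcases hu6 with h | h | h | h | h | h <;>
        rcases hw6 with h' | h' | h' | h' | h' | h' <;>
        rw [h, h'] at h1 huw ⊢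
      · exact (G.loopless.irrefl _ huw).elim
      · simp [ha1] at h1
      · exact absurd ((eQv1.symm.trans (chord_pairs G M hM v1 v3 v6 v2 h1 hd1' hd2')).trans eQv3) hQ12
      · exact absurd ((eQv1.symm.trans (chord_pairs G M hM v1 v4 v6 v5 h1 hd1' hd3)).trans eQv4) hQ13
      · exact absurd ((eQv1.symm.trans (chord_pairs G M hM v1 v5 v6 v4 h1 hd1' hd3'')).trans eQv5) hQ13
      · simp [hd1'] at h1
      · simp [ha1'] at h1
      · exact (G.loopless.irrefl _ huw).elim
      · simp [hd2] at h1
      · exact absurd ((eQv2.symm.trans (chord_pairs G M hM v2 v4 v3 v5 h1 hd2 hd3)).trans eQv4) hQ23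
      · exact absurd ((eQv2.symm.trans (chord_pairs G M hM v2 v5 v3 v4 h1 hd2 hd3'')).trans eQv5) hQ23
      · exact absurd ((eQv2.symm.trans (chord_pairs G M hM v2 v6 v3 v1 h1 hd2 hd1)).trans eQv6).symm hQ12
      · exact absurd ((eQv3.symm.trans (chord_pairs G M hM v3 v1 v2 v6 h1 hd2' hd1')).trans eQv1).symm hQ12
      · simp [hd2'] at h1
      · exact (G.loopless.irrefl _ huw).elim
      · simp [ha2] at h1
      · exact absurd ((eQv3.symm.trans (chord_pairs G M hM v3 v5 v2 v4 h1 hd2' hd3'')).trans eQv5) hQ23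
      · exact absurd ((eQv3.symm.trans (chord_pairs G M hM v3 v6 v2 v1 h1 hd2' hd1)).trans eQv6).symm hQ12
      · exact absurd ((eQv4.symm.trans (chord_pairs G M hM v4 v1 v5 v6 h1 hd3 hd1')).trans eQv1).symm hQ13
      · exact absurd ((eQv4.symm.trans (chord_pairs G M hM v4 v2 v5 v3 h1 hd3 hd2)).trans eQv2).symm hQ23
      · simp [ha2'] at h1
      · exact (G.loopless.irrefl _ huw).elim
      · simp [hd3] at h1
      · exact absurd ((eQv4.symm.trans (chord_pairs G M hM v4 v6 v5 v1 h1 hd3 hd1)).trans eQv6).symm hQ13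
      · exact absurd ((eQv5.symm.trans (chord_pairs G M hM v5 v1 v4 v6 h1 hd3'' hd1')).trans eQv1).symm hQ13
      · exact absurd ((eQv5.symm.trans (chord_pairs G M hM v5 v2 v4 v3 h1 hd3'' hd2)).trans eQv2).symm hQ23
      · exact absurd ((eQv5.symm.trans (chord_pairs G M hM v5 v3 v4 v2 h1 hd3'' hd2')).trans eQv3).symm hQ23
      · simp [hd3''] at h1
      · exact (G.loopless.irrefl _ huw).elim
      · simp [ha3] at h1
      · simp [hd1] at h1
      · exact absurd ((eQv6.symm.trans (chord_pairs G M hM v6 v2 v1 v3 h1 hd1 hd2)).trans eQv2) hQ12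
      · exact absurd ((eQv6.symm.trans (chord_pairs G M hM v6 v3 v1 v2 h1 hd1 hd2')).trans eQv3) hQ12
      · exact absurd ((eQv6.symm.trans (chord_pairs G M hM v6 v4 v1 v5 h1 hd1 hd3)).trans eQv4) hQ13
      · simp [ha3'] at h1
      · exact (G.loopless.irrefl _ huw).elim
    · rcases hin2 u w huw h2 with h | h | h <;> rw [h]
      · exact Or.inr (Or.inr (Or.inr (Or.inr (Or.inr rfl))))
      · exact Or.inr (Or.inl rfl)
      · exact Or.inr (Or.inr (Or.inr (Or.inl rfl)))
end

section
/- Let G be a cubic graph containing an induced 6-cycle C = (e0 e1 e2 e3 e4 e5) such that G − E(C) admits a proper 3-edge-colouring under which the six edges joining C to the rest of G, taken in cyclic order, receive colours (1,1,2,2,3,3) or (1,2,2,3,3,1). Then df(G) ≤ 3. -/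
open SimpleGraph

variable {V : Type} [Fintype V] [DecidableEq V]

/-- The edge set of the 6-cycle given by an enumeration `g` of its vertices. -/
def hexEdges (g : Fin 6 → V) : Set (Sym2 V) :=
  {e | ∃ i : Fin 6, e = s(g i, g (i + 1))}

/-! ### Auxiliary machinery for the proof -/

namespace Stmt13Aux

/-- The colour pattern on the six pendant edges. -/
def pat : Fin 6 → Fin 3 := ![0, 0, 1, 1, 2, 2]

/-- Which cycle edges (indexed by their first vertex) go into matching `k`. -/
def cyc : Fin 3 → Finset (Fin 6) := ![{2, 4}, {0, 4}, {0, 2}]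

lemma Dcyc1 : ∀ (k : Fin 3) (j : Fin 6), j ∈ cyc k → pat j ≠ k ∧ pat (j + 1) ≠ k := by decide

lemma Dcyc2 : ∀ (k : Fin 3) (i : Fin 6), pat i ≠ k →
    (i ∈ cyc k ∧ i - 1 ∉ cyc k) ∨ (i ∉ cyc k ∧ i - 1 ∈ cyc k) := by decide

lemma Dcyc3 : ∀ j : Fin 6, (∃ k, j ∈ cyc k) ∨ j = 1 ∨ j = 3 ∨ j = 5 := by decide

lemma D0 : ∀ i : Fin 6, i - 1 + 1 = i := by decide

lemma D0' : ∀ i : Fin 6, i + 1 ≠ i - 1 := by decide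

/-- The `k`-th matching: colour class `k` together with two cycle edges. -/
def MS (G : SimpleGraph V) (g : Fin 6 → V) (c : Sym2 V → Fin 3) (k : Fin 3) :
    G.Subgraph where
  verts := Set.univ
  Adj u w := G.Adj u w ∧
    ((s(u, w) ∉ hexEdges g ∧ c s(u, w) = k) ∨ ∃ j ∈ cyc k, s(u, w) = s(g j, g (j + 1)))
  adj_sub h := h.1
  edge_vert _ := Set.mem_univ _
  symm := by
    constructor
    intro u w h
    refine ⟨h.1.symm, ?_⟩
    rw [Sym2.eq_swap]
    exact h.2

lemma MS_adj (G : SimpleGraph V) (g : Fin 6 → V) (c : Sym2 V → Fin 3) (k : Fin 3)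
    (u w : V) : (MS G g c k).Adj u w ↔ G.Adj u w ∧
      ((s(u, w) ∉ hexEdges g ∧ c s(u, w) = k) ∨ ∃ j ∈ cyc k, s(u, w) = s(g j, g (j + 1))) :=
  Iff.rfl

lemma main (G : SimpleGraph V) (hG : IsCubic G)
    (g : Fin 6 → V) (hinj : Function.Injective g)
    (hadj : ∀ i : Fin 6, G.Adj (g i) (g (i + 1)))
    (hind : ∀ i j : Fin 6, G.Adj (g i) (g j) → j = i + 1 ∨ i = j + 1)
    (f : Fin 6 → Sym2 V)
    (hf : ∀ i : Fin 6, f i ∈ G.edgeSet ∧ g i ∈ f i ∧ f i ∉ hexEdges g)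
    (c : Sym2 V → Fin 3)
    (hc : ProperEdgeColoring (G.deleteEdges (hexEdges g)) c)
    (hpat : ∀ i : Fin 6, c (f i) = pat i) :
    defect G ≤ 3 := by
  classical
  have hex1 : ∀ i : Fin 6, s(g i, g (i + 1)) ∈ hexEdges g := fun i => ⟨i, rfl⟩
  have hex2 : ∀ i : Fin 6, s(g i, g (i - 1)) ∈ hexEdges g := by
    intro i
    refine ⟨i - 1, ?_⟩
    rw [D0 i]
    exact Sym2.eq_swap
  have hexv : ∀ u w : V, s(u, w) ∈ hexEdges g → ∃ j, u = g j := by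
    rintro u w ⟨j, he⟩
    rcases Sym2.eq_iff.mp he with ⟨e, -⟩ | ⟨e, -⟩
    · exact ⟨j, e⟩
    · exact ⟨j + 1, e⟩
  obtain ⟨h, hh⟩ : ∃ h : Fin 6 → V, ∀ i, f i = s(g i, h i) := by
    choose h hh using fun i => Sym2.mem_iff_exists.mp (hf i).2.1
    exact ⟨h, hh⟩
  have hGh : ∀ i, G.Adj (g i) (h i) := by
    intro i
    have := (hf i).1
    rwa [hh i, SimpleGraph.mem_edgeSet] at this
  have hfnot : ∀ i, s(g i, h i) ∉ hexEdges g := by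
    intro i
    rw [← hh i]
    exact (hf i).2.2
  have hhg : ∀ i j, h i ≠ g j := by
    intro i j e
    have hadj' : G.Adj (g i) (g j) := by rw [← e]; exact hGh i
    rcases hind i j hadj' with rfl | rfl
    · exact hfnot i (by rw [e]; exact hex1 i)
    · exact hfnot (j + 1) (by rw [e]; exact ⟨j, Sym2.eq_swap⟩)
  -- classification of neighbours of cycle vertices
  have hA : ∀ i : Fin 6, ∀ w : V, G.Adj (g i) w → w = g (i + 1) ∨ w = g (i - 1) ∨ w = h i := by
    intro i w hw
    have hd1 : g (i + 1) ≠ g (i - 1) := fun e => D0' i (hinj e)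
    have hd2 : g (i + 1) ≠ h i := fun e => hhg i (i + 1) e.symm
    have hd3 : g (i - 1) ≠ h i := fun e => hhg i (i - 1) e.symm
    have hsub : ({g (i + 1), g (i - 1), h i} : Set V) ⊆ G.neighborSet (g i) := by
      intro x hx
      simp only [Set.mem_insert_iff, Set.mem_singleton_iff] at hx
      rcases hx with rfl | rfl | rfl
      · exact hadj i
      · have := (hadj (i - 1)).symm
        rwa [D0 i] at this
      · exact hGh i
    have hcard : ({g (i + 1), g (i - 1), h i} : Set V).ncard = 3 := by
      rw [Set.ncard_insert_of_notMem (by simp [hd1, hd2]),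
        Set.ncard_insert_of_notMem (by simp [hd3]), Set.ncard_singleton]
    have heq : ({g (i + 1), g (i - 1), h i} : Set V) = G.neighborSet (g i) :=
      Set.eq_of_subset_of_ncard_le hsub (by rw [hG (g i), hcard]) (Set.toFinite _)
    have hmem : w ∈ G.neighborSet (g i) := hw
    rw [← heq] at hmem
    simpa using hmem
  -- the three perfect matchings
  have hpm : ∀ k, (MS G g c k).IsPerfectMatching := by
    intro k
    constructor
    · rintro v -
      by_cases hv : ∃ i, v = g i
      · obtain ⟨i, rfl⟩ := hv
        by_cases hk : pat i = k
        · -- matched along the pendant edge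
          refine ⟨h i, ⟨hGh i, Or.inl ⟨hfnot i, by rw [← hh i, hpat i, hk]⟩⟩, ?_⟩
          intro w hw
          rw [MS_adj] at hw
          obtain ⟨hw1, hw2 | hw2⟩ := hw
          · rcases hA i w hw1 with rfl | rfl | rfl
            · exact absurd (hex1 i) hw2.1
            · exact absurd (hex2 i) hw2.1
            · rfl
          · exfalso
            obtain ⟨j, hj, he⟩ := hw2
            rcases Sym2.eq_iff.mp he with ⟨e1, -⟩ | ⟨e1, -⟩
            · exact (Dcyc1 k j hj).1 ((hinj e1) ▸ hk)
            · exact (Dcyc1 k j hj).2 ((hinj e1) ▸ hk)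
        · -- matched along a cycle edge
          rcases Dcyc2 k i hk with ⟨hi1, hi2⟩ | ⟨hi1, hi2⟩
          · refine ⟨g (i + 1), ⟨hadj i, Or.inr ⟨i, hi1, rfl⟩⟩, ?_⟩
            intro w hw
            rw [MS_adj] at hw
            obtain ⟨hw1, hw2 | hw2⟩ := hw
            · exfalso
              rcases hA i w hw1 with rfl | rfl | rfl
              · exact hw2.1 (hex1 i)
              · exact hw2.1 (hex2 i)
              · rw [← hh i, hpat i] at hw2
                exact hk hw2.2
            · obtain ⟨j, hj, he⟩ := hw2
              rcases Sym2.eq_iff.mp he with ⟨e1, e2⟩ | ⟨e1, e2⟩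
              · obtain rfl := hinj e1
                exact e2
              · exfalso
                have e3 : i = j + 1 := hinj e1
                have e4 : j = i - 1 := by rw [e3]; abel
                exact hi2 (e4 ▸ hj)
          · refine ⟨g (i - 1), ⟨?_, Or.inr ⟨i - 1, hi2, ?_⟩⟩, ?_⟩
            · have := (hadj (i - 1)).symm
              rwa [D0 i] at this
            · rw [D0 i]
              exact Sym2.eq_swap
            · intro w hw
              rw [MS_adj] at hw
              obtain ⟨hw1, hw2 | hw2⟩ := hw
              · exfalso
                rcases hA i w hw1 with rfl | rfl | rfl
                · exact hw2.1 (hex1 i)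
                · exact hw2.1 (hex2 i)
                · rw [← hh i, hpat i] at hw2
                  exact hk hw2.2
              · obtain ⟨j, hj, he⟩ := hw2
                rcases Sym2.eq_iff.mp he with ⟨e1, e2⟩ | ⟨e1, e2⟩
                · exfalso
                  obtain rfl := hinj e1
                  exact hi1 hj
                · have e3 : i = j + 1 := hinj e1
                  have e4 : j = i - 1 := by rw [e3]; abel
                  rw [e2, e4]
      · -- off-cycle vertex
        push_neg at hv
        have hnohex : ∀ w, s(v, w) ∉ hexEdges g := by
          intro w hmem
          obtain ⟨j, e⟩ := hexv v w hmem
          exact hv j e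
        have hmemdel : ∀ w, G.Adj v w → s(v, w) ∈ (G.deleteEdges (hexEdges g)).edgeSet := by
          intro w hw
          rw [SimpleGraph.mem_edgeSet, SimpleGraph.deleteEdges_adj]
          exact ⟨hw, hnohex w⟩
        have hinjOn : Set.InjOn (fun w => c s(v, w)) ↑(G.neighborSet v).toFinset := by
          intro w1 h1 w2 h2 hcc
          by_contra hne
          rw [Finset.mem_coe, Set.mem_toFinset, SimpleGraph.mem_neighborSet] at h1 h2
          have hne' : s(v, w1) ≠ s(v, w2) := by
            intro e
            rcases Sym2.eq_iff.mp e with ⟨-, e2⟩ | ⟨e1, e2⟩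
            · exact hne e2
            · exact h1.ne' e2
          exact hc _ (hmemdel w1 h1) _ (hmemdel w2 h2) hne'
            ⟨v, Sym2.mem_mk_left _ _, Sym2.mem_mk_left _ _⟩ hcc
        have hcard3 : (G.neighborSet v).toFinset.card = 3 := by
          rw [← Set.ncard_eq_toFinset_card']
          exact hG v
        obtain ⟨w0, hw0, hcw0⟩ : ∃ w0 ∈ (G.neighborSet v).toFinset, c s(v, w0) = k := by
          have himg : (G.neighborSet v).toFinset.image (fun w => c s(v, w)) = Finset.univ := by
            apply Finset.eq_univ_of_card
            rw [Finset.card_image_of_injOn hinjOn, hcard3, Fintype.card_fin]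
          have hk : k ∈ (G.neighborSet v).toFinset.image (fun w => c s(v, w)) := by
            rw [himg]; exact Finset.mem_univ k
          obtain ⟨w0, hw0, hcw0⟩ := Finset.mem_image.mp hk
          exact ⟨w0, hw0, hcw0⟩
        have hadj0 : G.Adj v w0 := by
          rw [Set.mem_toFinset, SimpleGraph.mem_neighborSet] at hw0
          exact hw0
        refine ⟨w0, ⟨hadj0, Or.inl ⟨hnohex w0, hcw0⟩⟩, ?_⟩
        intro w hw
        rw [MS_adj] at hw
        obtain ⟨hw1, hw2 | hw2⟩ := hw
        · exact hinjOn (by simp [SimpleGraph.mem_neighborSet, hw1]) hw0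
            (hw2.2.trans hcw0.symm)
        · exfalso
          obtain ⟨j, hj, he⟩ := hw2
          exact hnohex w ⟨j, he⟩
    · intro v
      exact Set.mem_univ v
  -- the uncovered edges
  have hsub3 : uncovered G (MS G g c) ⊆
      ({s(g 1, g 2), s(g 3, g 4), s(g 5, g 0)} : Set (Sym2 V)) := by
    intro e he
    induction e using Sym2.ind with
    | _ u w =>
      obtain ⟨heE, hnc⟩ := he
      by_cases hhex : s(u, w) ∈ hexEdges g
      · obtain ⟨j, he'⟩ := hhex
        rw [he'] at hnc ⊢
        rcases Dcyc3 j with ⟨k, hk⟩ | hj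
        · refine absurd ?_ (hnc k)
          rw [SimpleGraph.Subgraph.mem_edgeSet, MS_adj]
          exact ⟨hadj j, Or.inr ⟨j, hk, rfl⟩⟩
        · rcases hj with rfl | rfl | rfl
          · have e2 : (1 : Fin 6) + 1 = 2 := by decide
            rw [e2]
            exact Set.mem_insert _ _
          · have e2 : (3 : Fin 6) + 1 = 4 := by decide
            rw [e2]
            exact Set.mem_insert_of_mem _ (Set.mem_insert _ _)
          · have e2 : (5 : Fin 6) + 1 = 0 := by decide
            rw [e2]
            exact Set.mem_insert_of_mem _ (Set.mem_insert_of_mem _ rfl)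
      · exfalso
        apply hnc (c s(u, w))
        rw [SimpleGraph.Subgraph.mem_edgeSet]
        exact ⟨(SimpleGraph.mem_edgeSet G).mp heE, Or.inl ⟨hhex, rfl⟩⟩
  have hle : defect G ≤ (uncovered G (MS G g c)).ncard :=
    Nat.sInf_le ⟨MS G g c, hpm, rfl⟩
  refine hle.trans ?_
  refine le_trans (Set.ncard_le_ncard hsub3 (Set.toFinite _)) ?_
  refine le_trans (Set.ncard_insert_le _ _) ?_
  have h2 : ({s(g 3, g 4), s(g 5, g 0)} : Set (Sym2 V)).ncard ≤ 2 := by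
    refine le_trans (Set.ncard_insert_le _ _) ?_
    simp [Set.ncard_singleton]
  omega

end Stmt13Aux

theorem stmt_13 (G : SimpleGraph V) (hG : IsCubic G)
    (g : Fin 6 → V) (hinj : Function.Injective g)
    (hadj : ∀ i : Fin 6, G.Adj (g i) (g (i + 1)))
    (hind : ∀ i j : Fin 6, G.Adj (g i) (g j) → j = i + 1 ∨ i = j + 1)
    (f : Fin 6 → Sym2 V)
    (hf : ∀ i : Fin 6, f i ∈ G.edgeSet ∧ g i ∈ f i ∧ f i ∉ hexEdges g)
    (c : Sym2 V → Fin 3)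
    (hc : ProperEdgeColoring (G.deleteEdges (hexEdges g)) c)
    (hpat : ∃ r : Fin 6, ∀ i : Fin 6,
      c (f (i + r)) = ![0, 0, 1, 1, 2, 2] i) :
    defect G ≤ 3 := by
  obtain ⟨r, hr⟩ := hpat
  have hrot : hexEdges (fun i : Fin 6 => g (i + r)) = hexEdges g := by
    ext e
    simp only [hexEdges, Set.mem_setOf_eq]
    constructor
    · rintro ⟨i, rfl⟩
      exact ⟨i + r, by rw [show i + r + 1 = i + 1 + r from by abel]⟩
    · rintro ⟨j, rfl⟩
      exact ⟨j - r, by rw [show j - r + r = j from by abel,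
        show j - r + 1 + r = j + 1 from by abel]⟩
  exact Stmt13Aux.main G hG (fun i => g (i + r))
    (fun a b e => add_right_cancel (hinj e))
    (fun i => by
      have := hadj (i + r)
      rwa [show i + r + 1 = i + 1 + r from by abel] at this)
    (fun i j ha => by
      rcases hind (i + r) (j + r) ha with e | e
      · left
        rw [show i + r + 1 = i + 1 + r from by abel] at e
        exact add_right_cancel e
      · right
        rw [show j + r + 1 = j + 1 + r from by abel] at e
        exact add_right_cancel e)
    (fun i => f (i + r))
    (fun i => ⟨(hf (i + r)).1, (hf (i + r)).2.1, by rw [hrot]; exact (hf (i + r)).2.2⟩)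
    c (by rwa [hrot]) hr
end
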